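/- Let φ : ℂⁿ → ℝ be of class C² and let g : ℂⁿ → ℂ be of class C². Set h = e^{φ/2}·g. Then pointwise e^{−φ/2} · Σ_{j=1}^n ∂/∂z̄_j ( (∂φ/∂z_j)·h − ∂h/∂z_j ) = ¼ ( −Δ_A g + V·g ), where Δ_A g = Σ_{j=1}^n [(−∂/∂x_j − (i/2) ∂φ/∂y_j)² + (−∂/∂y_j + (i/2) ∂φ/∂x_j)²] g and V = ½ Δφ. -/

import Mathlib

open MeasureTheory

/-- Partial derivative `∂f/∂x_j` of `f : ℂⁿ → ℂ`, identifying `ℂⁿ ≅ ℝ²ⁿ`, `z_j = x_j + i y_j`. -/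
noncomputable def DXc (n : ℕ) (j : Fin n) (f : (Fin n → ℂ) → ℂ) (z : Fin n → ℂ) : ℂ :=
  fderiv ℝ f z (Pi.single j 1)

/-- Partial derivative `∂f/∂y_j` of `f : ℂⁿ → ℂ`. -/
noncomputable def DYc (n : ℕ) (j : Fin n) (f : (Fin n → ℂ) → ℂ) (z : Fin n → ℂ) : ℂ :=
  fderiv ℝ f z (Pi.single j Complex.I)

/-- Partial derivative `∂φ/∂x_j` of `φ : ℂⁿ → ℝ`. -/
noncomputable def DXr (n : ℕ) (j : Fin n) (φ : (Fin n → ℂ) → ℝ) (z : Fin n → ℂ) : ℝ :=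
  fderiv ℝ φ z (Pi.single j 1)

/-- Partial derivative `∂φ/∂y_j` of `φ : ℂⁿ → ℝ`. -/
noncomputable def DYr (n : ℕ) (j : Fin n) (φ : (Fin n → ℂ) → ℝ) (z : Fin n → ℂ) : ℝ :=
  fderiv ℝ φ z (Pi.single j Complex.I)

/-- Wirtinger derivative `∂f/∂z_j = ½(∂f/∂x_j - i ∂f/∂y_j)`. -/
noncomputable def wdz (n : ℕ) (j : Fin n) (f : (Fin n → ℂ) → ℂ) (z : Fin n → ℂ) : ℂ :=
  (1 / 2) * (DXc n j f z - Complex.I * DYc n j f z)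

/-- Wirtinger derivative `∂f/∂z̄_j = ½(∂f/∂x_j + i ∂f/∂y_j)`. -/
noncomputable def wdzb (n : ℕ) (j : Fin n) (f : (Fin n → ℂ) → ℂ) (z : Fin n → ℂ) : ℂ :=
  (1 / 2) * (DXc n j f z + Complex.I * DYc n j f z)

/-- The operator `(-∂/∂x_j - (i/2) ∂φ/∂y_j)` appearing in the magnetic Laplacian. -/
noncomputable def opM1 (n : ℕ) (φ : (Fin n → ℂ) → ℝ) (j : Fin n)
    (v : (Fin n → ℂ) → ℂ) : (Fin n → ℂ) → ℂ :=
  fun z => -(DXc n j v z) - (Complex.I / 2) * (DYr n j φ z : ℂ) * v z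

/-- The operator `(-∂/∂y_j + (i/2) ∂φ/∂x_j)` appearing in the magnetic Laplacian. -/
noncomputable def opM2 (n : ℕ) (φ : (Fin n → ℂ) → ℝ) (j : Fin n)
    (v : (Fin n → ℂ) → ℂ) : (Fin n → ℂ) → ℂ :=
  fun z => -(DYc n j v z) + (Complex.I / 2) * (DXr n j φ z : ℂ) * v z

/-- The magnetic Laplacian
`Δ_A = Σ_j [(-∂/∂x_j - (i/2)∂φ/∂y_j)² + (-∂/∂y_j + (i/2)∂φ/∂x_j)²]`. -/
noncomputable def lapA (n : ℕ) (φ : (Fin n → ℂ) → ℝ) (g : (Fin n → ℂ) → ℂ)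
    (z : Fin n → ℂ) : ℂ :=
  ∑ j, (opM1 n φ j (opM1 n φ j g) z + opM2 n φ j (opM2 n φ j g) z)

/-- The Laplacian `Δφ = Σ_j (∂²φ/∂x_j² + ∂²φ/∂y_j²)` of `φ : ℂⁿ → ℝ`. -/
noncomputable def lapR (n : ℕ) (φ : (Fin n → ℂ) → ℝ) (z : Fin n → ℂ) : ℝ :=
  ∑ j, (DXr n j (fun w => DXr n j φ w) z + DYr n j (fun w => DYr n j φ w) z)

/-- The electric potential `V = ½ Δφ`. -/
noncomputable def potV (n : ℕ) (φ : (Fin n → ℂ) → ℝ) (z : Fin n → ℂ) : ℝ :=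
  (1 / 2) * lapR n φ z

section helpers
variable {n : ℕ}

lemma fderiv_ofReal_comp {f : (Fin n → ℂ) → ℝ} {w : Fin n → ℂ}
    (hf : DifferentiableAt ℝ f w) (v : Fin n → ℂ) :
    fderiv ℝ (fun x => ((f x : ℝ) : ℂ)) w v = ((fderiv ℝ f w v : ℝ) : ℂ) := by
  have h : HasFDerivAt (fun x => ((f x : ℝ) : ℂ)) (Complex.ofRealCLM.comp (fderiv ℝ f w)) w :=
    Complex.ofRealCLM.hasFDerivAt.comp w hf.hasFDerivAt
  rw [h.fderiv]; rfl

lemma diff_ofReal_comp {f : (Fin n → ℂ) → ℝ} {w : Fin n → ℂ}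
    (hf : DifferentiableAt ℝ f w) :
    DifferentiableAt ℝ (fun x => ((f x : ℝ) : ℂ)) w :=
  Complex.ofRealCLM.differentiable.differentiableAt.comp w hf

lemma fderiv_mul_apply' {a b : (Fin n → ℂ) → ℂ} {w : Fin n → ℂ}
    (ha : DifferentiableAt ℝ a w) (hb : DifferentiableAt ℝ b w) (v : Fin n → ℂ) :
    fderiv ℝ (fun x => a x * b x) w v = a w * fderiv ℝ b w v + b w * fderiv ℝ a w v := by
  rw [fderiv_fun_mul ha hb]
  simp [smul_eq_mul]

lemma hasFDerivAt_expHalf {φ : (Fin n → ℂ) → ℝ} {w : Fin n → ℂ}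
    (hf : DifferentiableAt ℝ φ w) :
    HasFDerivAt (fun x => Complex.exp ((φ x : ℂ) / 2))
      (Complex.exp ((φ w : ℂ) / 2) • ((2:ℂ)⁻¹ • (Complex.ofRealCLM.comp (fderiv ℝ φ w)))) w := by
  have h1 : HasFDerivAt (fun x => ((φ x : ℝ) : ℂ)) (Complex.ofRealCLM.comp (fderiv ℝ φ w)) w :=
    Complex.ofRealCLM.hasFDerivAt.comp w hf.hasFDerivAt
  have h2 : HasFDerivAt (fun x => ((φ x : ℝ) : ℂ) / 2)
      ((2:ℂ)⁻¹ • (Complex.ofRealCLM.comp (fderiv ℝ φ w))) w := by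
    simpa only [Pi.smul_def, smul_eq_mul, ← div_eq_inv_mul] using h1.const_smul ((2:ℂ)⁻¹)
  exact h2.cexp

lemma fderiv_expHalf_apply {φ : (Fin n → ℂ) → ℝ} {w : Fin n → ℂ}
    (hf : DifferentiableAt ℝ φ w) (v : Fin n → ℂ) :
    fderiv ℝ (fun x => Complex.exp ((φ x : ℂ) / 2)) w v
      = Complex.exp ((φ w : ℂ) / 2) * (((fderiv ℝ φ w v : ℝ) : ℂ) / 2) := by
  rw [(hasFDerivAt_expHalf hf).fderiv]
  simp [smul_eq_mul]
  ring

lemma diff_expHalf {φ : (Fin n → ℂ) → ℝ} (hf : Differentiable ℝ φ) :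
    Differentiable ℝ (fun x => Complex.exp ((φ x : ℂ) / 2)) :=
  fun w => (hasFDerivAt_expHalf (hf w)).differentiableAt

lemma contDiff_fderiv_apply {F : Type*} [NormedAddCommGroup F] [NormedSpace ℝ F]
    {f : (Fin n → ℂ) → F} (hf : ContDiff ℝ 2 f) (u : Fin n → ℂ) :
    ContDiff ℝ 1 (fun w => fderiv ℝ f w u) :=
  (hf.fderiv_right (by norm_num)).clm_apply contDiff_const

lemma fderiv_swap {F : Type*} [NormedAddCommGroup F] [NormedSpace ℝ F]
    {f : (Fin n → ℂ) → F} (hf : ContDiff ℝ 2 f) (z u v : Fin n → ℂ) :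
    fderiv ℝ (fun w => fderiv ℝ f w u) z v = fderiv ℝ (fun w => fderiv ℝ f w v) z u := by
  have hd : DifferentiableAt ℝ (fderiv ℝ f) z :=
    ((hf.fderiv_right (m := 1) (by norm_num)).differentiable one_ne_zero).differentiableAt
  rw [fderiv_clm_apply hd (differentiableAt_const u),
      fderiv_clm_apply hd (differentiableAt_const v)]
  simp only [fderiv_fun_const, Pi.zero_apply, ContinuousLinearMap.comp_zero, zero_add,
    ContinuousLinearMap.add_apply, ContinuousLinearMap.flip_apply]
  exact (hf.contDiffAt.isSymmSndFDerivAt (by simp)) v u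

lemma diff_comb4 {u1 u2 u3 u4 g : (Fin n → ℂ) → ℂ} {z : Fin n → ℂ}
    (c1 c2 c3 c4 : ℂ)
    (h1 : DifferentiableAt ℝ u1 z) (h2 : DifferentiableAt ℝ u2 z)
    (h3 : DifferentiableAt ℝ u3 z) (h4 : DifferentiableAt ℝ u4 z)
    (hg : DifferentiableAt ℝ g z) :
    DifferentiableAt ℝ
      (fun w => c1 * (u1 w * g w) + c2 * (u2 w * g w) + c3 * u3 w + c4 * u4 w) z :=
  ((((h1.mul hg).const_mul c1).add ((h2.mul hg).const_mul c2)).add (h3.const_mul c3)).add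
    (h4.const_mul c4)

lemma fderiv_comb4 {u1 u2 u3 u4 g : (Fin n → ℂ) → ℂ} {z : Fin n → ℂ}
    (c1 c2 c3 c4 : ℂ)
    (h1 : DifferentiableAt ℝ u1 z) (h2 : DifferentiableAt ℝ u2 z)
    (h3 : DifferentiableAt ℝ u3 z) (h4 : DifferentiableAt ℝ u4 z)
    (hg : DifferentiableAt ℝ g z) (v : Fin n → ℂ) :
    fderiv ℝ (fun w => c1 * (u1 w * g w) + c2 * (u2 w * g w) + c3 * u3 w + c4 * u4 w) z v
      = c1 * (u1 z * fderiv ℝ g z v + g z * fderiv ℝ u1 z v)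
        + c2 * (u2 z * fderiv ℝ g z v + g z * fderiv ℝ u2 z v)
        + c3 * fderiv ℝ u3 z v + c4 * fderiv ℝ u4 z v := by
  have d1 : DifferentiableAt ℝ (fun w => c1 * (u1 w * g w)) z := (h1.mul hg).const_mul c1
  have d2 : DifferentiableAt ℝ (fun w => c2 * (u2 w * g w)) z := (h2.mul hg).const_mul c2
  have d3 : DifferentiableAt ℝ (fun w => c3 * u3 w) z := h3.const_mul c3
  have d4 : DifferentiableAt ℝ (fun w => c4 * u4 w) z := h4.const_mul c4
  rw [fderiv_fun_add ((d1.fun_add d2).fun_add d3) d4, fderiv_fun_add (d1.fun_add d2) d3, fderiv_fun_add d1 d2]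
  simp only [ContinuousLinearMap.add_apply]
  rw [fderiv_const_mul (h1.fun_mul hg) c1, fderiv_const_mul (h2.fun_mul hg) c2,
      fderiv_const_mul h3 c3, fderiv_const_mul h4 c4]
  simp only [ContinuousLinearMap.smul_apply, smul_eq_mul]
  rw [fderiv_fun_mul h1 hg, fderiv_fun_mul h2 hg]
  simp only [ContinuousLinearMap.add_apply, ContinuousLinearMap.smul_apply, smul_eq_mul]

end helpers

lemma key (n : ℕ) (j : Fin n) (φ : (Fin n → ℂ) → ℝ) (hφ : ContDiff ℝ 2 φ)
    (g : (Fin n → ℂ) → ℂ) (hg : ContDiff ℝ 2 g) (z : Fin n → ℂ) :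
    Complex.exp (-(φ z : ℂ) / 2) *
      wdzb n j (fun w => wdz n j (fun v => ((φ v : ℝ) : ℂ)) w *
          (Complex.exp ((φ w : ℂ) / 2) * g w)
        - wdz n j (fun x => Complex.exp ((φ x : ℂ) / 2) * g x) w) z
    = (1 / 4) * (-(opM1 n φ j (opM1 n φ j g) z + opM2 n φ j (opM2 n φ j g) z)
        + (((DXr n j (fun w => DXr n j φ w) z + DYr n j (fun w => DYr n j φ w) z : ℝ)) : ℂ) / 2
          * g z) := by
  have hφd : Differentiable ℝ φ := hφ.differentiable (by norm_num)
  have hgd : Differentiable ℝ g := hg.differentiable (by norm_num)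
  have hEd : Differentiable ℝ (fun x => Complex.exp ((φ x : ℂ) / 2)) := diff_expHalf hφd
  have dp1 : ∀ w, DifferentiableAt ℝ (fun w' => fderiv ℝ φ w' (Pi.single j 1)) w :=
    fun w => ((contDiff_fderiv_apply hφ (Pi.single j 1)).differentiable one_ne_zero) w
  have dp2 : ∀ w, DifferentiableAt ℝ (fun w' => fderiv ℝ φ w' (Pi.single j Complex.I)) w :=
    fun w => ((contDiff_fderiv_apply hφ (Pi.single j Complex.I)).differentiable one_ne_zero) w
  have dgx : ∀ w, DifferentiableAt ℝ (fun w' => fderiv ℝ g w' (Pi.single j 1)) w :=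
    fun w => ((contDiff_fderiv_apply hg (Pi.single j 1)).differentiable one_ne_zero) w
  have dgy : ∀ w, DifferentiableAt ℝ (fun w' => fderiv ℝ g w' (Pi.single j Complex.I)) w :=
    fun w => ((contDiff_fderiv_apply hg (Pi.single j Complex.I)).differentiable one_ne_zero) w
  have dP1 : ∀ w, DifferentiableAt ℝ
      (fun w' => ((fderiv ℝ φ w' (Pi.single j 1) : ℝ) : ℂ)) w :=
    fun w => diff_ofReal_comp (dp1 w)
  have dP2 : ∀ w, DifferentiableAt ℝ
      (fun w' => ((fderiv ℝ φ w' (Pi.single j Complex.I) : ℝ) : ℂ)) w :=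
    fun w => diff_ofReal_comp (dp2 w)
  have hhd : ∀ w v, (fderiv ℝ (fun x => Complex.exp ((φ x : ℂ) / 2) * g x) w) v
      = Complex.exp ((φ w : ℂ) / 2) *
          (((fderiv ℝ φ w v : ℝ) : ℂ) / 2 * g w + fderiv ℝ g w v) := by
    intro w v
    rw [fderiv_mul_apply' (hEd w) (hgd w) v, fderiv_expHalf_apply (hφd w) v]
    ring
  simp only [wdzb, wdz, DXc, DYc, DXr, DYr, opM1, opM2]
  have hL : (fun w =>
      1 / 2 * ((fderiv ℝ (fun v => ((φ v : ℝ) : ℂ)) w) (Pi.single j 1) -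
            Complex.I * (fderiv ℝ (fun v => ((φ v : ℝ) : ℂ)) w) (Pi.single j Complex.I)) *
          (Complex.exp ((φ w : ℂ) / 2) * g w) -
        1 / 2 * ((fderiv ℝ (fun x => Complex.exp ((φ x : ℂ) / 2) * g x) w) (Pi.single j 1) -
            Complex.I *
              (fderiv ℝ (fun x => Complex.exp ((φ x : ℂ) / 2) * g x) w) (Pi.single j Complex.I)))
      = fun w => Complex.exp ((φ w : ℂ) / 2) *
          ((1/4) * (((fderiv ℝ φ w (Pi.single j 1) : ℝ) : ℂ) * g w)
            + (-Complex.I/4) * (((fderiv ℝ φ w (Pi.single j Complex.I) : ℝ) : ℂ) * g w)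
            + (-1/2) * (fderiv ℝ g w (Pi.single j 1))
            + (Complex.I/2) * (fderiv ℝ g w (Pi.single j Complex.I))) := by
    funext w
    rw [hhd w (Pi.single j 1), hhd w (Pi.single j Complex.I),
        fderiv_ofReal_comp (hφd w) (Pi.single j 1), fderiv_ofReal_comp (hφd w) (Pi.single j Complex.I)]
    ring
  rw [hL]
  have dG : ∀ w, DifferentiableAt ℝ (fun w' =>
      (1/4) * (((fderiv ℝ φ w' (Pi.single j 1) : ℝ) : ℂ) * g w')
      + (-Complex.I/4) * (((fderiv ℝ φ w' (Pi.single j Complex.I) : ℝ) : ℂ) * g w')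
      + (-1/2) * (fderiv ℝ g w' (Pi.single j 1))
      + (Complex.I/2) * (fderiv ℝ g w' (Pi.single j Complex.I))) w :=
    fun w => diff_comb4 _ _ _ _ (dP1 w) (dP2 w) (dgx w) (dgy w) (hgd w)
  have hFv : ∀ v, (fderiv ℝ (fun w => Complex.exp ((φ w : ℂ) / 2) *
      ((1/4) * (((fderiv ℝ φ w (Pi.single j 1) : ℝ) : ℂ) * g w)
        + (-Complex.I/4) * (((fderiv ℝ φ w (Pi.single j Complex.I) : ℝ) : ℂ) * g w)
        + (-1/2) * (fderiv ℝ g w (Pi.single j 1))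
        + (Complex.I/2) * (fderiv ℝ g w (Pi.single j Complex.I)))) z) v
    = Complex.exp ((φ z : ℂ) / 2) * (
        ((1/4) * (((fderiv ℝ φ z (Pi.single j 1) : ℝ) : ℂ) * fderiv ℝ g z v
            + g z * ((fderiv ℝ (fun w => fderiv ℝ φ w (Pi.single j 1)) z v : ℝ) : ℂ))
          + (-Complex.I/4) * (((fderiv ℝ φ z (Pi.single j Complex.I) : ℝ) : ℂ) * fderiv ℝ g z v
            + g z * ((fderiv ℝ (fun w => fderiv ℝ φ w (Pi.single j Complex.I)) z v : ℝ) : ℂ))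
          + (-1/2) * fderiv ℝ (fun w => fderiv ℝ g w (Pi.single j 1)) z v
          + (Complex.I/2) * fderiv ℝ (fun w => fderiv ℝ g w (Pi.single j Complex.I)) z v)
        + ((1/4) * (((fderiv ℝ φ z (Pi.single j 1) : ℝ) : ℂ) * g z)
            + (-Complex.I/4) * (((fderiv ℝ φ z (Pi.single j Complex.I) : ℝ) : ℂ) * g z)
            + (-1/2) * (fderiv ℝ g z (Pi.single j 1))
            + (Complex.I/2) * (fderiv ℝ g z (Pi.single j Complex.I)))
          * (((fderiv ℝ φ z v : ℝ) : ℂ) / 2)) := by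
    intro v
    rw [fderiv_mul_apply' (hEd z) (dG z) v, fderiv_expHalf_apply (hφd z) v,
        fderiv_comb4 _ _ _ _ (dP1 z) (dP2 z) (dgx z) (dgy z) (hgd z) v,
        fderiv_ofReal_comp (dp1 z) v, fderiv_ofReal_comp (dp2 z) v]
    ring
  rw [hFv (Pi.single j 1), hFv (Pi.single j Complex.I)]
  have hM1fun : opM1 n φ j g = fun w =>
      (0:ℂ) * (((fderiv ℝ φ w (Pi.single j 1) : ℝ) : ℂ) * g w)
      + (-Complex.I/2) * (((fderiv ℝ φ w (Pi.single j Complex.I) : ℝ) : ℂ) * g w)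
      + (-1:ℂ) * (fderiv ℝ g w (Pi.single j 1))
      + (0:ℂ) * (fderiv ℝ g w (Pi.single j Complex.I)) := by
    funext w; simp only [opM1, DXc, DYr]; ring
  have hM2fun : opM2 n φ j g = fun w =>
      (Complex.I/2) * (((fderiv ℝ φ w (Pi.single j 1) : ℝ) : ℂ) * g w)
      + (0:ℂ) * (((fderiv ℝ φ w (Pi.single j Complex.I) : ℝ) : ℂ) * g w)
      + (0:ℂ) * (fderiv ℝ g w (Pi.single j 1))
      + (-1:ℂ) * (fderiv ℝ g w (Pi.single j Complex.I)) := by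
    funext w; simp only [opM2, DYc, DXr]; ring
  rw [hM1fun, hM2fun,
      fderiv_comb4 (0:ℂ) (-Complex.I/2) (-1:ℂ) (0:ℂ) (dP1 z) (dP2 z) (dgx z) (dgy z) (hgd z)
        (Pi.single j 1),
      fderiv_comb4 (Complex.I/2) (0:ℂ) (0:ℂ) (-1:ℂ) (dP1 z) (dP2 z) (dgx z) (dgy z) (hgd z)
        (Pi.single j Complex.I),
      fderiv_ofReal_comp (dp1 z) (Pi.single j 1), fderiv_ofReal_comp (dp2 z) (Pi.single j 1),
      fderiv_ofReal_comp (dp1 z) (Pi.single j Complex.I),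
      fderiv_ofReal_comp (dp2 z) (Pi.single j Complex.I)]
  rw [fderiv_swap hφ z (Pi.single j 1) (Pi.single j Complex.I),
      fderiv_swap hg z (Pi.single j 1) (Pi.single j Complex.I)]
  rw [Complex.ofReal_add]
  set a := g z with ha
  set b1 := fderiv ℝ g z (Pi.single j 1) with hb1
  set b2 := fderiv ℝ g z (Pi.single j Complex.I) with hb2
  set p1 := fderiv ℝ φ z (Pi.single j 1) with hp1
  set p2 := fderiv ℝ φ z (Pi.single j Complex.I) with hp2
  set q11 := fderiv ℝ (fun w => fderiv ℝ φ w (Pi.single j 1)) z (Pi.single j 1) with hq11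
  set q12 := fderiv ℝ (fun w => fderiv ℝ φ w (Pi.single j Complex.I)) z (Pi.single j 1) with hq12
  set q22 := fderiv ℝ (fun w => fderiv ℝ φ w (Pi.single j Complex.I)) z (Pi.single j Complex.I)
    with hq22
  set r11 := fderiv ℝ (fun w => fderiv ℝ g w (Pi.single j 1)) z (Pi.single j 1) with hr11
  set r12 := fderiv ℝ (fun w => fderiv ℝ g w (Pi.single j Complex.I)) z (Pi.single j 1) with hr12
  set r22 := fderiv ℝ (fun w => fderiv ℝ g w (Pi.single j Complex.I)) z (Pi.single j Complex.I)
    with hr22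
  have hce : Complex.exp (-(φ z : ℂ) / 2) * Complex.exp ((φ z : ℂ) / 2) = 1 := by
    rw [← Complex.exp_add, show -(φ z : ℂ) / 2 + (φ z : ℂ) / 2 = 0 by ring, Complex.exp_zero]
  linear_combination
    ((-1/4 : ℂ)*r11 + (1/8 : ℂ)*(q11:ℂ)*a + (1/16 : ℂ)*(p1:ℂ)*(p1:ℂ)*a
      + (-1/4 : ℂ)*Complex.I*(p2:ℂ)*b1 + (1/4 : ℂ)*Complex.I*(p1:ℂ)*b2
      + (1/4 : ℂ)*Complex.I*Complex.I*r22 + (-1/8 : ℂ)*Complex.I*Complex.I*(q22:ℂ)*a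
      + (-1/16 : ℂ)*Complex.I*Complex.I*(p2:ℂ)*(p2:ℂ)*a) * hce
    + ((1/4 : ℂ)*r22 + (-1/8 : ℂ)*(q22:ℂ)*a + (1/16 : ℂ)*(p1:ℂ)*(p1:ℂ)*a) * Complex.I_sq


lemma sum_comb {m : ℕ} (t s : Fin m → ℂ) (a : ℂ) :
    (1/4 : ℂ) * (-(∑ j, t j) + (1/2) * (∑ j, s j) * a) = ∑ j, (1/4 : ℂ) * (-(t j) + s j / 2 * a) := by
  have h1 : -(∑ j, t j) = ∑ j, -(t j) := by rw [← Finset.sum_neg_distrib]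
  have h2 : (1/2 : ℂ) * (∑ j, s j) * a = ∑ j, s j / 2 * a := by
    rw [Finset.mul_sum, Finset.sum_mul]
    exact Finset.sum_congr rfl fun j _ => by ring
  rw [h1, h2, ← Finset.sum_add_distrib, Finset.mul_sum]

/-- Let `φ : ℂⁿ → ℝ` and `g : ℂⁿ → ℂ` be of class `C²`, and set
`h = e^{φ/2}·g`. Then pointwise
`e^{-φ/2}·Σ_j ∂/∂z̄_j((∂φ/∂z_j)·h - ∂h/∂z_j) = ¼(-Δ_A g + V·g)`,
where `V = ½Δφ`. -/
theorem conjugated_box0n_eq_pauli_plus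
    (n : ℕ) (φ : (Fin n → ℂ) → ℝ) (hφ : ContDiff ℝ 2 φ)
    (g : (Fin n → ℂ) → ℂ) (hg : ContDiff ℝ 2 g)
    (h : (Fin n → ℂ) → ℂ) (hh : h = fun z => Complex.exp ((φ z : ℂ) / 2) * g z) :
    ∀ z, Complex.exp (-(φ z : ℂ) / 2) *
        (∑ j, wdzb n j
          (fun w => wdz n j (fun v => ((φ v : ℝ) : ℂ)) w * h w - wdz n j h w) z)
      = (1 / 4) * (-(lapA n φ g z) + (potV n φ z : ℂ) * g z) := by
  intro z
  simp only [hh, lapA, potV, lapR]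
  push_cast
  rw [Finset.mul_sum]
  rw [sum_comb (fun j => opM1 n φ j (opM1 n φ j g) z + opM2 n φ j (opM2 n φ j g) z)
      (fun j => ((DXr n j (fun w => DXr n j φ w) z : ℝ) : ℂ)
        + ((DYr n j (fun w => DYr n j φ w) z : ℝ) : ℂ)) (g z)]
  refine Finset.sum_congr rfl fun j _ => ?_
  rw [← Complex.ofReal_add]
  exact key n j φ hφ g hg z
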